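/- arXiv:1711.07706 — 3 statements merged into one kernel-verified Lean document; each statement's English description precedes it below -/
import Mathlib

section
/- Let S₁ and S₂ be two finite multisets of positive integers. If the formal power series ∏_{l ∈ S₁} (1 - u^l)^{-1} equals ∏_{m ∈ S₂} (1 - u^m)^{-1} as formal power series over ℚ (or as holomorphic functions on the open unit disc), then S₁ = S₂ as multisets. -/
open PowerSeries

private lemma constCoeff_prod_one_sub (s : Multiset ℕ) (hs : ∀ l ∈ s, 0 < l) :
    constantCoeff (s.map (fun l => 1 - (X : PowerSeries ℚ) ^ l)).prod = 1 := by
  induction s using Multiset.induction with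
  | empty => simp
  | cons a s ih =>
    simp only [Multiset.map_cons, Multiset.prod_cons, map_mul]
    rw [ih (fun l hl => hs l (Multiset.mem_cons_of_mem hl))]
    have ha : 0 < a := hs a (Multiset.mem_cons_self a s)
    simp [constantCoeff_X, zero_pow ha.ne']

private lemma coeff_prod_one_sub (d : ℕ) (hd : 0 < d) (s : Multiset ℕ)
    (hs : ∀ l ∈ s, d ≤ l) :
    coeff d (s.map (fun l => 1 - (X : PowerSeries ℚ) ^ l)).prod = -(s.count d : ℚ) := by
  induction s using Multiset.induction with
  | empty => simp [coeff_one, hd.ne']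
  | cons a s ih =>
    have hsd : ∀ l ∈ s, d ≤ l := fun l hl => hs l (Multiset.mem_cons_of_mem hl)
    have had : d ≤ a := hs a (Multiset.mem_cons_self a s)
    have hspos : ∀ l ∈ s, 0 < l := fun l hl => lt_of_lt_of_le hd (hsd l hl)
    simp only [Multiset.map_cons, Multiset.prod_cons, sub_mul, one_mul, map_sub,
      coeff_X_pow_mul']
    rw [ih hsd]
    by_cases hda : a ≤ d
    · have : a = d := le_antisymm hda had
      subst this
      rw [if_pos le_rfl]
      simp only [Nat.sub_self, coeff_zero_eq_constantCoeff,
        constCoeff_prod_one_sub s hspos, Multiset.count_cons_self]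
      push_cast
      ring
    · rw [if_neg hda, Multiset.count_cons_of_ne (by rintro rfl; exact hda le_rfl)]
      ring

private lemma prod_one_sub_ne_empty (S : Multiset ℕ) (hS : ∀ l ∈ S, 0 < l) (hne : S ≠ 0)
    (h : (S.map (fun l => 1 - (X : PowerSeries ℚ) ^ l)).prod = 1) : False := by
  obtain ⟨F, hFne⟩ : S.toFinset.Nonempty := by
    simpa [Multiset.toFinset_nonempty] using hne
  set d := S.toFinset.min' ⟨F, hFne⟩ with hd
  have hdS : d ∈ S := Multiset.mem_toFinset.1 (S.toFinset.min'_mem _)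
  have hdpos : 0 < d := hS d hdS
  have hdle : ∀ l ∈ S, d ≤ l := fun l hl =>
    S.toFinset.min'_le l (Multiset.mem_toFinset.2 hl)
  have := coeff_prod_one_sub d hdpos S hdle
  rw [h, coeff_one, if_neg hdpos.ne'] at this
  have hc : 0 < S.count d := Multiset.count_pos.2 hdS
  have : (S.count d : ℚ) = 0 := by linarith
  exact_mod_cast hc.ne' (by exact_mod_cast this)

private lemma aux_main : ∀ n (S₁ S₂ : Multiset ℕ), Multiset.card S₁ = n →
    (∀ l ∈ S₁, 0 < l) → (∀ l ∈ S₂, 0 < l) →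
    (S₁.map (fun l => 1 - (X : PowerSeries ℚ) ^ l)).prod
      = (S₂.map (fun l => 1 - (X : PowerSeries ℚ) ^ l)).prod → S₁ = S₂ := by
  intro n
  induction n with
  | zero =>
    intro S₁ S₂ hcard h₁ h₂ h
    have hS₁ : S₁ = 0 := Multiset.card_eq_zero.1 hcard
    subst hS₁
    by_contra hne
    exact prod_one_sub_ne_empty S₂ h₂ (fun he => hne he.symm) (by simpa using h.symm)
  | succ n ih =>
    intro S₁ S₂ hcard h₁ h₂ h
    have hS₁ne : S₁ ≠ 0 := by
      intro he; subst he; simp at hcard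
    have hne : S₁ + S₂ ≠ 0 := by simp [hS₁ne]
    obtain ⟨F, hFne⟩ : (S₁ + S₂).toFinset.Nonempty := Multiset.toFinset_nonempty.2 hne
    set d := (S₁ + S₂).toFinset.min' ⟨F, hFne⟩ with hd
    have hdS : d ∈ S₁ + S₂ := Multiset.mem_toFinset.1 ((S₁ + S₂).toFinset.min'_mem _)
    have hdpos : 0 < d := by
      rcases Multiset.mem_add.1 hdS with h' | h'
      exacts [h₁ d h', h₂ d h']
    have hdle₁ : ∀ l ∈ S₁, d ≤ l := fun l hl =>
      (S₁ + S₂).toFinset.min'_le l (Multiset.mem_toFinset.2 (Multiset.mem_add.2 (Or.inl hl)))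
    have hdle₂ : ∀ l ∈ S₂, d ≤ l := fun l hl =>
      (S₁ + S₂).toFinset.min'_le l (Multiset.mem_toFinset.2 (Multiset.mem_add.2 (Or.inr hl)))
    have hcount : S₁.count d = S₂.count d := by
      have e₁ := coeff_prod_one_sub d hdpos S₁ hdle₁
      have e₂ := coeff_prod_one_sub d hdpos S₂ hdle₂
      rw [h, e₂] at e₁
      exact_mod_cast neg_injective e₁.symm
    have hd₁ : d ∈ S₁ := by
      rcases Multiset.mem_add.1 hdS with h' | h'
      · exact h'
      · exact Multiset.count_pos.1 (hcount ▸ Multiset.count_pos.2 h')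
    have hd₂ : d ∈ S₂ := Multiset.count_pos.1 (hcount ▸ Multiset.count_pos.2 hd₁)
    have hc₁ : d ::ₘ S₁.erase d = S₁ := Multiset.cons_erase hd₁
    have hc₂ : d ::ₘ S₂.erase d = S₂ := Multiset.cons_erase hd₂
    have hXd : (1 - (X : PowerSeries ℚ) ^ d) ≠ 0 := by
      intro he
      have := congrArg constantCoeff he
      simp [constantCoeff_X, zero_pow hdpos.ne'] at this
    rw [← hc₁, ← hc₂, Multiset.map_cons, Multiset.map_cons, Multiset.prod_cons,
      Multiset.prod_cons] at h
    have hprod := mul_left_cancel₀ hXd h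
    have he₁ : ∀ l ∈ S₁.erase d, 0 < l := fun l hl => h₁ l (Multiset.mem_of_mem_erase hl)
    have he₂ : ∀ l ∈ S₂.erase d, 0 < l := fun l hl => h₂ l (Multiset.mem_of_mem_erase hl)
    have hcard' : Multiset.card (S₁.erase d) = n := by
      simp [Multiset.card_erase_of_mem hd₁, hcard]
    rw [← hc₁, ← hc₂, ih _ _ hcard' he₁ he₂ hprod]

private lemma inv_prod_mul_prod (s : Multiset ℕ) (hs : ∀ l ∈ s, 0 < l) :
    (s.map (fun l => (1 - (X : PowerSeries ℚ) ^ l)⁻¹)).prod *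
      (s.map (fun l => 1 - (X : PowerSeries ℚ) ^ l)).prod = 1 := by
  induction s using Multiset.induction with
  | empty => simp
  | cons a s ih =>
    have ha : 0 < a := hs a (Multiset.mem_cons_self a s)
    have hc : constantCoeff (1 - (X : PowerSeries ℚ) ^ a) ≠ 0 := by
      simp [constantCoeff_X, zero_pow ha.ne']
    simp only [Multiset.map_cons, Multiset.prod_cons]
    calc (1 - (X : PowerSeries ℚ) ^ a)⁻¹ * (s.map (fun l => (1 - (X : PowerSeries ℚ) ^ l)⁻¹)).prod
        * ((1 - (X : PowerSeries ℚ) ^ a) * (s.map (fun l => 1 - (X : PowerSeries ℚ) ^ l)).prod)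
        = ((1 - (X : PowerSeries ℚ) ^ a)⁻¹ * (1 - (X : PowerSeries ℚ) ^ a)) *
          ((s.map (fun l => (1 - (X : PowerSeries ℚ) ^ l)⁻¹)).prod *
            (s.map (fun l => 1 - (X : PowerSeries ℚ) ^ l)).prod) := by ring
      _ = 1 := by
          rw [PowerSeries.inv_mul_cancel _ hc, ih (fun l hl => hs l (Multiset.mem_cons_of_mem hl))]
          simp

/-- If two finite multisets of positive integers give rise to the same Euler-type product
`∏_{l ∈ S} (1 - u^l)⁻¹` of formal power series over `ℚ`, then the multisets are equal. -/
theorem multiset_eq_of_euler_product_eq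
    (S₁ S₂ : Multiset ℕ) (hS₁ : ∀ l ∈ S₁, 0 < l) (hS₂ : ∀ l ∈ S₂, 0 < l)
    (h : (S₁.map (fun l => (1 - (PowerSeries.X : PowerSeries ℚ) ^ l)⁻¹)).prod
       = (S₂.map (fun l => (1 - (PowerSeries.X : PowerSeries ℚ) ^ l)⁻¹)).prod) :
    S₁ = S₂ := by
  set P₁ := (S₁.map (fun l => 1 - (X : PowerSeries ℚ) ^ l)).prod with hP₁
  set P₂ := (S₂.map (fun l => 1 - (X : PowerSeries ℚ) ^ l)).prod with hP₂
  set Q₁ := (S₁.map (fun l => (1 - (X : PowerSeries ℚ) ^ l)⁻¹)).prod with hQ₁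
  set Q₂ := (S₂.map (fun l => (1 - (X : PowerSeries ℚ) ^ l)⁻¹)).prod with hQ₂
  have h1 : Q₁ * P₁ = 1 := inv_prod_mul_prod S₁ hS₁
  have h2 : Q₂ * P₂ = 1 := inv_prod_mul_prod S₂ hS₂
  have hP : P₁ = P₂ := by
    calc P₁ = P₁ * (Q₂ * P₂) := by rw [h2, mul_one]
      _ = (Q₁ * P₁) * P₂ := by rw [← h]; ring
      _ = P₂ := by rw [h1, one_mul]
  exact aux_main _ S₁ S₂ rfl hS₁ hS₂ hP
end

section
/- Let a : ℕ → ℕ be a function with a(0) = 0 such that Σ_n a(n) x^n has radius of convergence > 0 in a suitable sense (a is supported on positive integers and the infinite product ∏_{n≥1} (1 - u^n)^{-a(n)} makes sense as a formal power series). If two such functions a, b satisfy ∏_{n≥1}(1 - u^n)^{-a(n)} = ∏_{n≥1}(1 - u^n)^{-b(n)} as formal power series over ℚ, then a = b. -/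
open PowerSeries Finset

private lemma ccX (N : ℕ) (hN : 0 < N) :
    constantCoeff (R := ℚ) (1 - X ^ N) = 1 := by
  simp [hN.ne']

private lemma coeff_X_pow_mul_of_lt (φ : PowerSeries ℚ) {N j : ℕ} (hj : j < N) :
    coeff (R := ℚ) j (X ^ N * φ) = 0 := by
  rw [coeff_mul]
  apply Finset.sum_eq_zero
  rintro ⟨i, l⟩ hm
  rw [Finset.HasAntidiagonal.mem_antidiagonal] at hm
  rw [coeff_X_pow, if_neg, zero_mul]
  omega

private lemma coeff_low (N m j : ℕ) (hj : j < N) :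
    coeff (R := ℚ) j ((1 - X ^ N) ^ m) = if j = 0 then 1 else 0 := by
  induction m with
  | zero => simp [coeff_one]
  | succ m ihm =>
      rw [pow_succ, mul_sub, mul_one, map_sub, ihm, mul_comm, coeff_X_pow_mul_of_lt _ hj,
        sub_zero]

private lemma cc_pow (N m : ℕ) (hN : 0 < N) :
    constantCoeff (R := ℚ) ((1 - X ^ N) ^ m) = 1 := by
  rw [map_pow, ccX N hN, one_pow]

private lemma coeff_top (N m : ℕ) (hN : 0 < N) :
    coeff (R := ℚ) N ((1 - X ^ N) ^ m) = -(m : ℚ) := by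
  induction m with
  | zero => simp [coeff_one, hN.ne']
  | succ m ihm =>
      rw [pow_succ, mul_sub, mul_one, map_sub, ihm, mul_comm]
      have hXc := coeff_X_pow_mul ((1 - (X : PowerSeries ℚ) ^ N) ^ m) N 0
      rw [zero_add] at hXc
      rw [hXc]
      simp only [coeff_zero_eq_constantCoeff, cc_pow N m hN]
      push_cast; ring

private lemma coeff_mul_of_low_zero {V D : PowerSeries ℚ} {m : ℕ}
    (hD : ∀ j < m, coeff (R := ℚ) j D = 0) :
    coeff (R := ℚ) m (V * D) = constantCoeff (R := ℚ) V * coeff (R := ℚ) m D := by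
  rw [coeff_mul]
  rw [Finset.sum_eq_single (0, m)]
  · simp
  · rintro ⟨i, l⟩ hm hne
    rw [Finset.HasAntidiagonal.mem_antidiagonal] at hm
    have : l < m := by
      rcases Nat.lt_or_ge l m with h' | h'
      · exact h'
      · exfalso; apply hne; have : l = m := by omega
        simp [this]; omega
    rw [hD l this, mul_zero]
  · intro hmem
    simp [Finset.HasAntidiagonal.mem_antidiagonal] at hmem

private lemma prod_inv_eq (a : ℕ → ℕ) (k : ℕ) :
    (∏ n ∈ Finset.Icc 1 k, ((1 - (X : PowerSeries ℚ) ^ n)⁻¹) ^ (a n))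
      = (∏ n ∈ Finset.Icc 1 k, (1 - (X : PowerSeries ℚ) ^ n) ^ (a n))⁻¹ := by
  have hcc : constantCoeff (R := ℚ) (∏ n ∈ Finset.Icc 1 k, (1 - (X : PowerSeries ℚ) ^ n) ^ (a n)) = 1 := by
    rw [map_prod]
    apply Finset.prod_eq_one
    intro n hn
    rw [cc_pow n (a n) (by rw [Finset.mem_Icc] at hn; omega)]
  rw [PowerSeries.eq_inv_iff_mul_eq_one (by rw [hcc]; norm_num)]
  rw [← Finset.prod_mul_distrib]
  apply Finset.prod_eq_one
  intro n hn
  rw [Finset.mem_Icc] at hn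
  rw [← mul_pow]
  rw [mul_comm, PowerSeries.mul_inv_cancel _ (by rw [ccX n (by omega)]; norm_num), one_pow]

/-- The infinite product `∏_{n ≥ 1} (1 - u^n)^{-a(n)}`, as a formal power series over `ℚ`,
determines the exponents `a(n)`.  The infinite product is encoded coefficient-wise: the
`k`-th coefficient of the full product equals the `k`-th coefficient of the finite partial
product over `1 ≤ n ≤ k`, since every further factor is `1 + (terms of degree > k)`. -/
theorem exponents_eq_of_infinite_euler_product_eq
    (a b : ℕ → ℕ) (ha0 : a 0 = 0) (hb0 : b 0 = 0)
    (h : ∀ k : ℕ,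
      (PowerSeries.coeff (R := ℚ) k)
        (∏ n ∈ Finset.Icc 1 k, ((1 - (PowerSeries.X : PowerSeries ℚ) ^ n)⁻¹) ^ (a n))
      = (PowerSeries.coeff (R := ℚ) k)
        (∏ n ∈ Finset.Icc 1 k, ((1 - (PowerSeries.X : PowerSeries ℚ) ^ n)⁻¹) ^ (b n))) :
    a = b := by
  funext n
  induction n using Nat.strong_induction_on with
  | _ n ih =>
    match n with
    | 0 => rw [ha0, hb0]
    | (k + 1) =>
      set m := k + 1 with hm
      have hm1 : 0 < m := Nat.succ_pos k
      -- the partial products up to k agree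
      set P' : PowerSeries ℚ := ∏ n ∈ Finset.Icc 1 k, (1 - X ^ n) ^ (a n) with hP'
      have hP'b : (∏ n ∈ Finset.Icc 1 k, (1 - (X : PowerSeries ℚ) ^ n) ^ (b n)) = P' := by
        apply Finset.prod_congr rfl
        intro n hn
        rw [Finset.mem_Icc] at hn
        rw [ih n (by omega)]
      set A : PowerSeries ℚ := ∏ n ∈ Finset.Icc 1 m, (1 - X ^ n) ^ (a n) with hA
      set B : PowerSeries ℚ := ∏ n ∈ Finset.Icc 1 m, (1 - X ^ n) ^ (b n) with hB
      have hAe : A = P' * (1 - X ^ m) ^ (a m) := by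
        rw [hA, Finset.prod_Icc_succ_top (by omega : 1 ≤ m)]
      have hBe : B = P' * (1 - X ^ m) ^ (b m) := by
        rw [hB, Finset.prod_Icc_succ_top (by omega : 1 ≤ m), hP'b]
      have hccP' : constantCoeff (R := ℚ) P' = 1 := by
        rw [hP', map_prod]
        apply Finset.prod_eq_one
        intro n hn
        rw [Finset.mem_Icc] at hn
        exact cc_pow n (a n) (by omega)
      have hccA : constantCoeff (R := ℚ) A = 1 := by
        rw [hAe, map_mul, hccP', cc_pow m (a m) hm1, one_mul]
      have hccB : constantCoeff (R := ℚ) B = 1 := by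
        rw [hBe, map_mul, hccP', cc_pow m (b m) hm1, one_mul]
      have hk := h m
      rw [prod_inv_eq a m, prod_inv_eq b m, ← hA, ← hB] at hk
      -- A⁻¹ - B⁻¹ = A⁻¹ * B⁻¹ * (B - A)
      have hkey : A⁻¹ - B⁻¹ = A⁻¹ * B⁻¹ * (B - A) := by
        have h1 : A * A⁻¹ = 1 := PowerSeries.mul_inv_cancel A (by rw [hccA]; norm_num)
        have h2 : B * B⁻¹ = 1 := PowerSeries.mul_inv_cancel B (by rw [hccB]; norm_num)
        calc A⁻¹ - B⁻¹ = A⁻¹ * (B * B⁻¹) - (A * A⁻¹) * B⁻¹ := by rw [h1, h2]; ring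
          _ = A⁻¹ * B⁻¹ * (B - A) := by ring
      set D : PowerSeries ℚ := (1 - X ^ m) ^ (b m) - (1 - X ^ m) ^ (a m) with hD
      have hBA : B - A = P' * D := by rw [hAe, hBe, hD]; ring
      have hDlow : ∀ j < m, coeff (R := ℚ) j D = 0 := by
        intro j hj
        rw [hD, map_sub, coeff_low m (b m) j hj, coeff_low m (a m) j hj, sub_self]
      have hPDlow : ∀ j < m, coeff (R := ℚ) j (P' * D) = 0 := by
        intro j hj
        rw [coeff_mul]
        apply Finset.sum_eq_zero
        rintro ⟨i, l⟩ hmem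
        rw [Finset.HasAntidiagonal.mem_antidiagonal] at hmem
        rw [hDlow l (by omega), mul_zero]
      have hDtop : coeff (R := ℚ) m D = (a m : ℚ) - (b m : ℚ) := by
        rw [hD, map_sub, coeff_top m (b m) hm1, coeff_top m (a m) hm1]; ring
      have h0 : (0 : ℚ) = coeff (R := ℚ) m (A⁻¹ - B⁻¹) := by
        rw [map_sub, hk, sub_self]
      rw [hkey, hBA, ← mul_assoc, coeff_mul_of_low_zero hDlow] at h0
      have hccV : constantCoeff (R := ℚ) (A⁻¹ * B⁻¹ * P') = 1 := by
        rw [map_mul, map_mul, PowerSeries.constantCoeff_inv, PowerSeries.constantCoeff_inv,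
          hccA, hccB, hccP']
        norm_num
      rw [hccV, one_mul, hDtop] at h0
      have : (a m : ℚ) = (b m : ℚ) := by linarith
      exact_mod_cast this
end

section
/- Let q ≥ 2 be a natural number and let S₁, S₂ be finite multisets of positive integers. Define F(u) = ∏_{l ∈ S₂}(1 - u^l) · ∏_{l ∈ S₁}(1 - (qu)^{-l}) and G(u) = ∏_{l ∈ S₁}(1 - u^l) · ∏_{l ∈ S₂}(1 - (qu)^{-l}) as functions on ℂ \ {0}. If F = G on ℂ \ {0}, and moreover the zeros of ∏_{l ∈ S_i}(1 - u^l) lie on the unit circle while the zeros of ∏_{l ∈ S_i}(1 - (qu)^{-l}) lie on the circle of radius 1/q, then the set of zeros on the unit circle (with multiplicity) of ∏_{l ∈ S₁}(1 - u^l) equals that of ∏_{l ∈ S₂}(1 - u^l), and hence S₁ = S₂ as multisets. -/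
open Complex Polynomial

/-- The multiset of roots (on the unit circle) of `∏_{l ∈ S} (1 - u^l)`. -/
noncomputable def unitCircleRoots (S : Multiset ℕ) : Multiset ℂ :=
  S.bind fun l => (Multiset.range l).map fun k =>
    Complex.exp (2 * Real.pi * Complex.I * k / l)

lemma myProdPow (c : ℂ) (S : Multiset ℕ) : (S.map fun l => c ^ l).prod = c ^ S.sum := by
  induction S using Multiset.induction_on with
  | empty => simp
  | cons a s ih => simp [ih, pow_add]

lemma mySumIte (p : ℕ → Prop) [DecidablePred p] (S : Multiset ℕ) :
    (S.map fun l => if p l then (1:ℕ) else 0).sum = S.countP p := by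
  induction S using Multiset.induction_on with
  | empty => simp
  | cons a s ih => simp [ih, Multiset.countP_cons, add_comm]

lemma myCountNthRoots (m l : ℕ) (hm : 0 < m) (hl : 0 < l) :
    (nthRoots l (1:ℂ)).count (Complex.exp (2 * Real.pi * Complex.I / m))
      = if m ∣ l then 1 else 0 := by
  classical
  have hprim := Complex.isPrimitiveRoot_exp m hm.ne'
  have hnodup := (Complex.isPrimitiveRoot_exp l hl.ne').nthRoots_one_nodup
  by_cases hdvd : m ∣ l
  · rw [if_pos hdvd]
    refine Multiset.count_eq_one_of_mem hnodup ?_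
    rw [mem_nthRoots hl]
    exact (hprim.pow_eq_one_iff_dvd l).mpr hdvd
  · rw [if_neg hdvd, Multiset.count_eq_zero]
    intro hmem
    rw [mem_nthRoots hl, hprim.pow_eq_one_iff_dvd] at hmem
    exact hdvd hmem

lemma myCountPFormula (S : Multiset ℕ) (m N : ℕ) (hm : 0 < m)
    (hS : ∀ l ∈ S, 0 < l ∧ l ≤ N) :
    S.countP (m ∣ ·) = ∑ k ∈ Finset.Icc 1 N, S.count (m * k) := by
  classical
  induction S using Multiset.induction_on with
  | empty => simp
  | cons a s ih =>
    have ha := hS a (Multiset.mem_cons_self a s)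
    have hs : ∀ l ∈ s, 0 < l ∧ l ≤ N := fun l hl => hS l (Multiset.mem_cons_of_mem hl)
    rw [Multiset.countP_cons]
    rw [ih hs]
    simp only [Multiset.count_cons]
    rw [Finset.sum_add_distrib]
    congr 1
    by_cases hdvd : m ∣ a
    · obtain ⟨c, hc⟩ := hdvd
      have hc1 : 1 ≤ c := Nat.pos_of_ne_zero (by rintro rfl; simp at hc; omega)
      have hcN : c ≤ N := le_trans (Nat.le_mul_of_pos_left c hm) (hc ▸ ha.2)
      have : ∀ k ∈ Finset.Icc 1 N, (if m * k = a then (1:ℕ) else 0) = if k = c then 1 else 0 := by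
        intro k _
        by_cases hk : k = c
        · subst hk; simp [hc]
        · have : m * k ≠ a := by
            rw [hc]; intro hh; exact hk (Nat.eq_of_mul_eq_mul_left hm hh)
          simp [this, hk]
      rw [Finset.sum_congr rfl this, Finset.sum_ite_eq' (Finset.Icc 1 N) c (fun _ => 1),
        if_pos (Finset.mem_Icc.mpr ⟨hc1, hcN⟩), if_pos ⟨c, hc⟩]
    · rw [if_neg hdvd, Finset.sum_eq_zero]
      intro k _
      have : m * k ≠ a := fun hh => hdvd ⟨k, hh.symm⟩
      simp [this]

lemma myMultisetEq (S₁ S₂ : Multiset ℕ) (h1 : ∀ l ∈ S₁, 0 < l) (h2 : ∀ l ∈ S₂, 0 < l)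
    (hcnt : ∀ m, 0 < m → S₁.countP (m ∣ ·) = S₂.countP (m ∣ ·)) : S₁ = S₂ := by
  classical
  set N := S₁.sum + S₂.sum + 1 with hN
  have hb1 : ∀ l ∈ S₁, 0 < l ∧ l ≤ N := fun l hl =>
    ⟨h1 l hl, by have := Multiset.single_le_sum (fun x _ => Nat.zero_le x) l hl; omega⟩
  have hb2 : ∀ l ∈ S₂, 0 < l ∧ l ≤ N := fun l hl =>
    ⟨h2 l hl, by have := Multiset.single_le_sum (fun x _ => Nat.zero_le x) l hl; omega⟩
  have hsplit : ∀ (S : Multiset ℕ) (m : ℕ), ∑ k ∈ Finset.Icc 1 N, S.count (m * k)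
      = S.count m + ∑ k ∈ Finset.Icc 2 N, S.count (m * k) := by
    intro S m
    have hins : Finset.Icc 1 N = insert 1 (Finset.Icc 2 N) := by
      ext x; simp [Finset.mem_Icc]; omega
    rw [hins, Finset.sum_insert (by simp [Finset.mem_Icc])]
    simp
  have key : ∀ j m, 0 < m → N ≤ m + j → S₁.count m = S₂.count m := by
    intro j
    induction j with
    | zero =>
      intro m hm hNm
      have e1 := myCountPFormula S₁ m N hm hb1
      have e2 := myCountPFormula S₂ m N hm hb2
      rw [hsplit] at e1 e2
      have hz : ∀ (S : Multiset ℕ), (∀ l ∈ S, 0 < l ∧ l ≤ N) →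
          (∑ k ∈ Finset.Icc 2 N, S.count (m * k)) = 0 := by
        intro S hS
        refine Finset.sum_eq_zero fun k hk => ?_
        rw [Multiset.count_eq_zero]
        intro hmem
        have hle := (hS _ hmem).2
        have hk2 : 2 ≤ k := (Finset.mem_Icc.mp hk).1
        nlinarith
      rw [hz S₁ hb1] at e1
      rw [hz S₂ hb2] at e2
      have := hcnt m hm
      omega
    | succ j ih =>
      intro m hm hNm
      have e1 := myCountPFormula S₁ m N hm hb1
      have e2 := myCountPFormula S₂ m N hm hb2
      rw [hsplit] at e1 e2
      have hT : (∑ k ∈ Finset.Icc 2 N, S₁.count (m * k))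
          = ∑ k ∈ Finset.Icc 2 N, S₂.count (m * k) := by
        refine Finset.sum_congr rfl fun k hk => ?_
        have hk2 : 2 ≤ k := (Finset.mem_Icc.mp hk).1
        have hmk : 0 < m * k := by positivity
        have hmk1 : m + 1 ≤ m * k := by nlinarith
        exact ih (m * k) hmk (by omega)
      have := hcnt m hm
      omega
  refine Multiset.ext.mpr fun a => ?_
  rcases Nat.eq_zero_or_pos a with rfl | ha
  · rw [Multiset.count_eq_zero_of_notMem (fun hmem => (h1 0 hmem).false),
      Multiset.count_eq_zero_of_notMem (fun hmem => (h2 0 hmem).false)]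
  · exact key N a ha (Nat.le_add_left N a)

lemma myEvalP (S : Multiset ℕ) (u : ℂ) :
    eval u ((S.map fun l => (1 : ℂ[X]) - X ^ l).prod) = (S.map fun l => 1 - u ^ l).prod := by
  rw [eval_multiset_prod, Multiset.map_map]
  simp

lemma myEvalQ (c : ℂ) (S : Multiset ℕ) (u : ℂ) :
    eval u ((S.map fun l => (C c * X) ^ l - 1).prod) = (S.map fun l => (c * u) ^ l - 1).prod := by
  rw [eval_multiset_prod, Multiset.map_map]
  simp

lemma myQfact (v : ℂ) (hv : v ≠ 0) (S : Multiset ℕ) :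
    (S.map fun l => v ^ l - 1).prod = (S.map fun l => 1 - (v⁻¹) ^ l).prod * v ^ S.sum := by
  rw [← myProdPow v S, ← Multiset.prod_map_mul]
  refine congrArg _ (Multiset.map_congr rfl fun l hl => ?_)
  rw [sub_mul, one_mul, ← mul_pow, inv_mul_cancel₀ hv, one_pow]

lemma myP_factors_ne (S : Multiset ℕ) (hS : ∀ l ∈ S, 0 < l) :
    (0 : ℂ[X]) ∉ S.map fun l => (1 : ℂ[X]) - X ^ l := by
  intro h0
  obtain ⟨l, hl, he⟩ := Multiset.mem_map.mp h0
  have := congrArg (eval 0) he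
  simp [zero_pow (hS l hl).ne'] at this

lemma myQ_factors_ne (c : ℂ) (S : Multiset ℕ) (hS : ∀ l ∈ S, 0 < l) :
    (0 : ℂ[X]) ∉ S.map fun l => (C c * X) ^ l - 1 := by
  intro h0
  obtain ⟨l, hl, he⟩ := Multiset.mem_map.mp h0
  have := congrArg (eval 0) he
  simp [zero_pow (hS l hl).ne'] at this

lemma myRootsP (S : Multiset ℕ) (hS : ∀ l ∈ S, 0 < l) :
    ((S.map fun l => (1 : ℂ[X]) - X ^ l).prod).roots = S.bind fun l => nthRoots l 1 := by
  rw [roots_multiset_prod _ (myP_factors_ne S hS), Multiset.bind_map]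
  refine Multiset.bind_congr fun l hl => ?_
  have h : ((1 : ℂ[X]) - X ^ l) = -(X ^ l - C 1) := by rw [C_1]; ring
  rw [h, roots_neg]
  rfl

/-- Zero-separation argument: if
`∏_{l ∈ S₂}(1 - u^l) · ∏_{l ∈ S₁}(1 - (qu)^{-l}) = ∏_{l ∈ S₁}(1 - u^l) · ∏_{l ∈ S₂}(1 - (qu)^{-l})`
for all `u ≠ 0`, with `q ≥ 2` (so the circles of radii `1` and `1/q` are disjoint), then the
unit-circle zero multisets of `∏_{l ∈ S₁}(1 - u^l)` and `∏_{l ∈ S₂}(1 - u^l)` coincide, and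
hence `S₁ = S₂` as multisets. -/
theorem multiset_eq_of_functional_equation_products_eq
    (q : ℕ) (hq : 2 ≤ q)
    (S₁ S₂ : Multiset ℕ) (hS₁ : ∀ l ∈ S₁, 0 < l) (hS₂ : ∀ l ∈ S₂, 0 < l)
    (h : ∀ u : ℂ, u ≠ 0 →
      (S₂.map (fun l => 1 - u ^ l)).prod * (S₁.map (fun l => 1 - (((q : ℂ) * u)⁻¹) ^ l)).prod
      = (S₁.map (fun l => 1 - u ^ l)).prod *
          (S₂.map (fun l => 1 - (((q : ℂ) * u)⁻¹) ^ l)).prod) :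
    unitCircleRoots S₁ = unitCircleRoots S₂ ∧ S₁ = S₂ := by
  classical
  have hc : (q : ℂ) ≠ 0 := Nat.cast_ne_zero.mpr (by omega)
  have hP₁ne : (S₁.map fun l => (1 : ℂ[X]) - X ^ l).prod ≠ 0 :=
    Multiset.prod_ne_zero (myP_factors_ne S₁ hS₁)
  have hP₂ne : (S₂.map fun l => (1 : ℂ[X]) - X ^ l).prod ≠ 0 :=
    Multiset.prod_ne_zero (myP_factors_ne S₂ hS₂)
  have hQ₁ne : (S₁.map fun l => (C (q:ℂ) * X) ^ l - 1).prod ≠ 0 :=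
    Multiset.prod_ne_zero (myQ_factors_ne _ S₁ hS₁)
  have hQ₂ne : (S₂.map fun l => (C (q:ℂ) * X) ^ l - 1).prod ≠ 0 :=
    Multiset.prod_ne_zero (myQ_factors_ne _ S₂ hS₂)
  have hMne : ∀ s : ℕ, (C (q:ℂ) * X) ^ s ≠ 0 :=
    fun s => pow_ne_zero s (mul_ne_zero (by simpa using hc) X_ne_zero)
  -- polynomial identity
  have hpoly : (S₂.map fun l => (1 : ℂ[X]) - X ^ l).prod
        * (S₁.map fun l => (C (q:ℂ) * X) ^ l - 1).prod * (C (q:ℂ) * X) ^ S₂.sum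
      = (S₁.map fun l => (1 : ℂ[X]) - X ^ l).prod
        * (S₂.map fun l => (C (q:ℂ) * X) ^ l - 1).prod * (C (q:ℂ) * X) ^ S₁.sum := by
    apply eq_of_infinite_eval_eq
    have hinf : ({(0:ℂ)}ᶜ : Set ℂ).Infinite := (Set.finite_singleton 0).infinite_compl
    refine Set.Infinite.mono ?_ hinf
    intro x hx
    have hx0 : x ≠ 0 := by simpa using hx
    have hv : (q : ℂ) * x ≠ 0 := mul_ne_zero hc hx0
    show eval x _ = eval x _
    simp only [eval_mul, eval_pow, eval_C, eval_X, myEvalP, myEvalQ]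
    rw [myQfact _ hv S₁, myQfact _ hv S₂]
    linear_combination ((q:ℂ) * x) ^ S₁.sum * ((q:ℂ) * x) ^ S₂.sum * h x hx0
  -- norms of roots
  have habsP : ∀ (S : Multiset ℕ), (∀ l ∈ S, 0 < l) → ∀ z ∈
      ((S.map fun l => (1 : ℂ[X]) - X ^ l).prod).roots, ‖z‖ = 1 := by
    intro S hS z hz
    rw [myRootsP S hS, Multiset.mem_bind] at hz
    obtain ⟨l, hl, hzl⟩ := hz
    rw [mem_nthRoots (hS l hl)] at hzl
    exact Complex.norm_eq_one_of_pow_eq_one hzl (hS l hl).ne'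
  have habsQ : ∀ (S : Multiset ℕ), (∀ l ∈ S, 0 < l) → ∀ z ∈
      ((S.map fun l => (C (q:ℂ) * X) ^ l - 1).prod).roots, ¬ (‖z‖ = 1) := by
    intro S hS z hz hz1
    have hroot := (mem_roots'.mp hz).2
    rw [IsRoot, myEvalQ, Multiset.prod_eq_zero_iff] at hroot
    obtain ⟨l, hl, hfl⟩ := Multiset.mem_map.mp hroot
    have hpow : ((q:ℂ) * z) ^ l = 1 := sub_eq_zero.mp hfl
    have hn : ‖(q:ℂ) * z‖ = 1 := Complex.norm_eq_one_of_pow_eq_one hpow (hS l hl).ne'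
    rw [norm_mul, Complex.norm_natCast, hz1, mul_one] at hn
    have : (2:ℝ) ≤ (q:ℝ) := by exact_mod_cast hq
    linarith
  have habsM : ∀ (s : ℕ), ∀ z ∈ ((C (q:ℂ) * X) ^ s).roots, ¬ (‖z‖ = 1) := by
    intro s z hz hz1
    have hroot := (mem_roots'.mp hz).2
    rw [IsRoot, eval_pow, eval_mul, eval_C, eval_X] at hroot
    have hz0 : (q:ℂ) * z = 0 := (pow_eq_zero_iff'.mp hroot).1
    rcases mul_eq_zero.mp hz0 with h0 | h0
    · exact hc h0
    · rw [h0] at hz1; simp at hz1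
  -- roots multiset identity
  have hrootsum :
      ((S₂.map fun l => (1 : ℂ[X]) - X ^ l).prod).roots
        + ((S₁.map fun l => (C (q:ℂ) * X) ^ l - 1).prod).roots
        + (((C (q:ℂ) * X) ^ S₂.sum : ℂ[X])).roots
      = ((S₁.map fun l => (1 : ℂ[X]) - X ^ l).prod).roots
        + ((S₂.map fun l => (C (q:ℂ) * X) ^ l - 1).prod).roots
        + (((C (q:ℂ) * X) ^ S₁.sum : ℂ[X])).roots := by
    rw [← roots_mul (mul_ne_zero hP₂ne hQ₁ne),
      ← roots_mul (mul_ne_zero (mul_ne_zero hP₂ne hQ₁ne) (hMne S₂.sum)),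
      ← roots_mul (mul_ne_zero hP₁ne hQ₂ne),
      ← roots_mul (mul_ne_zero (mul_ne_zero hP₁ne hQ₂ne) (hMne S₁.sum))]
    rw [hpoly]
  have hPP : ((S₂.map fun l => (1 : ℂ[X]) - X ^ l).prod).roots
      = ((S₁.map fun l => (1 : ℂ[X]) - X ^ l).prod).roots := by
    have hf := congrArg (Multiset.filter (fun z => ‖z‖ = 1)) hrootsum
    rw [Multiset.filter_add, Multiset.filter_add, Multiset.filter_add, Multiset.filter_add,
      Multiset.filter_eq_self.mpr (habsP S₂ hS₂),
      Multiset.filter_eq_self.mpr (habsP S₁ hS₁),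
      Multiset.filter_eq_nil.mpr (habsQ S₁ hS₁),
      Multiset.filter_eq_nil.mpr (habsQ S₂ hS₂),
      Multiset.filter_eq_nil.mpr (habsM S₁.sum),
      Multiset.filter_eq_nil.mpr (habsM S₂.sum)] at hf
    simpa using hf
  have hbind : (S₂.bind fun l => nthRoots l (1:ℂ)) = S₁.bind fun l => nthRoots l 1 := by
    rw [← myRootsP S₁ hS₁, ← myRootsP S₂ hS₂, hPP]
  have hcnt : ∀ m, 0 < m → S₁.countP (m ∣ ·) = S₂.countP (m ∣ ·) := by
    intro m hm
    have hcount : ∀ (S : Multiset ℕ), (∀ l ∈ S, 0 < l) →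
        (S.bind fun l => nthRoots l (1:ℂ)).count (Complex.exp (2 * Real.pi * Complex.I / m))
          = S.countP (m ∣ ·) := by
      intro S hS
      rw [Multiset.count_bind, ← mySumIte (m ∣ ·) S]
      exact congrArg _ (Multiset.map_congr rfl fun l hl => myCountNthRoots m l hm (hS l hl))
    rw [← hcount S₁ hS₁, ← hcount S₂ hS₂, hbind]
  have hSeq : S₁ = S₂ := myMultisetEq S₁ S₂ hS₁ hS₂ hcnt
  exact ⟨by rw [hSeq], hSeq⟩
end
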